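/- arXiv:2112.10250 — 4 statements merged into one kernel-verified Lean document; each statement's English description precedes it below -/
import Mathlib

section
/- If $v_1 v_2 \ldots v_k$ is a directed path in a digraph $G$ without self-loops, and two non-endpoint vertices $v_a$ and $v_b$ (with $1 < a < b < k$) have the same type (i.e., the same set of in-neighbors and the same set of out-neighbors), then $b \neq a+1$, there is an edge from $v_a$ to $v_{b+1}$, and there is an edge from $v_b$ to $v_{a+1}$; hence $v_1 \ldots v_a v_{b+1} \ldots v_k$ is a directed path and $v_{a+1} \ldots v_b v_{a+1}$ is a directed cycle, and together they cover exactly the vertex set of the original path. -/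
variable {V : Type*}

/-- Two vertices have the same type: identical in-neighbors and out-neighbors. -/
def SameType (A : V → V → Prop) (u v : V) : Prop :=
  (∀ w, A w u ↔ A w v) ∧ (∀ w, A u w ↔ A v w)

/-- A directed path: distinct vertices with consecutive edges. -/
def IsDiPath (A : V → V → Prop) (l : List V) : Prop :=
  l.Nodup ∧ l.Chain' A

/-- A directed cycle: distinct vertices, consecutive edges, an edge from last to head. -/
def IsDiCycle (A : V → V → Prop) (l : List V) : Prop :=
  2 ≤ l.length ∧ l.Nodup ∧ l.Chain' A ∧
    ∃ x y, l.head? = some x ∧ l.getLast? = some y ∧ A y x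



lemma chain'_range_map (A : V → V → Prop) (f : ℕ → V) (n : ℕ)
    (h : ∀ i, i + 1 < n → A (f i) (f (i + 1))) :
    List.Chain' A ((List.range n).map f) := by
  rw [List.Chain', List.isChain_map]
  match n with
  | 0 => simp
  | m + 1 =>
    rw [List.isChain_range_succ]
    intro i hi
    exact h i (by omega)

lemma nodup_range_map (f : ℕ → V) (n : ℕ)
    (h : ∀ i j, i < n → j < n → f i = f j → i = j) :
    ((List.range n).map f).Nodup :=
  (List.nodup_range (n := n)).map_on (fun i hi j hj hf =>
    h i j (List.mem_range.mp hi) (List.mem_range.mp hj) hf)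

lemma getLast?_range_map (f : ℕ → V) (n : ℕ) :
    ((List.range (n + 1)).map f).getLast? = some (f n) := by
  rw [List.range_succ, List.map_append]
  simp

lemma head?_range_map (f : ℕ → V) (n : ℕ) :
    ((List.range (n + 1)).map f).head? = some (f 0) := by
  rw [List.range_succ_eq_map]
  simp

theorem stmt0 [DecidableEq V] (A : V → V → Prop) (hirr : ∀ x, ¬ A x x)
    (k a b : ℕ) (v : ℕ → V)
    (hinj : ∀ i j, i < k → j < k → v i = v j → i = j)
    (hedge : ∀ i, i + 1 < k → A (v i) (v (i + 1)))
    (ha : 0 < a) (hab : a < b) (hb : b < k - 1)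
    (htype : SameType A (v a) (v b)) :
    b ≠ a + 1 ∧ A (v a) (v (b + 1)) ∧ A (v b) (v (a + 1)) ∧
    IsDiPath A ((List.range (a + 1)).map v ++
        (List.range (k - 1 - b)).map (fun i => v (b + 1 + i))) ∧
    IsDiCycle A ((List.range (b - a)).map (fun i => v (a + 1 + i))) ∧
    ((List.range (a + 1)).map v ++
        (List.range (k - 1 - b)).map (fun i => v (b + 1 + i))).toFinset ∪
      ((List.range (b - a)).map (fun i => v (a + 1 + i))).toFinset =
      ((List.range k).map v).toFinset := by
  have hk : b + 1 < k := by omega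
  have hne : b ≠ a + 1 := by
    intro h
    have := hedge a (by omega)
    rw [← h] at this
    exact hirr _ ((htype.2 (v b)).mp this)
  have hab2 : A (v a) (v (b + 1)) :=
    (htype.2 (v (b + 1))).mpr (hedge b hk)
  have hba2 : A (v b) (v (a + 1)) :=
    (htype.2 (v (a + 1))).mp (hedge a (by omega))
  refine ⟨hne, hab2, hba2, ⟨?_, ?_⟩, ⟨?_, ?_, ?_, ?_⟩, ?_⟩
  · -- Nodup of path
    rw [List.nodup_append']
    refine ⟨nodup_range_map v (a + 1) (fun i j hi hj => hinj i j (by omega) (by omega)),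
      nodup_range_map _ (k - 1 - b) (fun i j hi hj h => by
        have := hinj (b + 1 + i) (b + 1 + j) (by omega) (by omega) h; omega), ?_⟩
    intro x hx hx'
    obtain ⟨i, hi, rfl⟩ := List.mem_map.mp hx
    obtain ⟨j, hj, hvj⟩ := List.mem_map.mp hx'
    rw [List.mem_range] at hi hj
    have := hinj (b + 1 + j) i (by omega) (by omega) hvj
    omega
  · -- Chain' of path
    rw [List.Chain', List.isChain_append]
    refine ⟨chain'_range_map A v (a + 1) (fun i hi => hedge i (by omega)),
      chain'_range_map A _ (k - 1 - b) (fun i hi => hedge (b + 1 + i) (by omega)), ?_⟩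
    intro x hx y hy
    rcases Nat.exists_eq_succ_of_ne_zero (n := k - 1 - b) (by omega) with ⟨m, hm⟩
    have h1 : x = v a := by
      have := getLast?_range_map v a
      rw [this] at hx; exact (Option.some_inj.mp hx.symm)
    have h2 : y = v (b + 1) := by
      rw [hm, head?_range_map] at hy
      exact (Option.some_inj.mp hy.symm)
    rw [h1, h2]; exact hab2
  · -- length ≥ 2
    simp only [List.length_map, List.length_range]
    omega
  · exact nodup_range_map _ (b - a) (fun i j hi hj h => by
      have := hinj (a + 1 + i) (a + 1 + j) (by omega) (by omega) h; omega)
  · exact chain'_range_map A _ (b - a) (fun i hi => hedge (a + 1 + i) (by omega))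
  · refine ⟨v (a + 1), v b, ?_, ?_, hba2⟩
    · rcases Nat.exists_eq_succ_of_ne_zero (n := b - a) (by omega) with ⟨m, hm⟩
      rw [hm, head?_range_map]
    · rcases Nat.exists_eq_succ_of_ne_zero (n := b - a) (by omega) with ⟨m, hm⟩
      rw [hm, getLast?_range_map]
      congr 2
      omega
  · ext x
    simp only [Finset.mem_union, List.mem_toFinset, List.mem_append, List.mem_map,
      List.mem_range]
    constructor
    · rintro ((⟨i, hi, rfl⟩ | ⟨i, hi, rfl⟩) | ⟨i, hi, rfl⟩) <;> exact ⟨_, by omega, rfl⟩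
    · rintro ⟨i, hi, rfl⟩
      rcases lt_or_ge i (a + 1) with h | h
      · exact Or.inl (Or.inl ⟨i, h, rfl⟩)
      rcases le_or_gt i b with h' | h'
      · refine Or.inr ⟨i - (a + 1), by omega, ?_⟩
        congr 1; omega
      · refine Or.inl (Or.inr ⟨i - (b + 1), by omega, ?_⟩)
        congr 1; omega
end

section
/- In any instance of the kidney exchange problem with $\ell_p \le \ell_c$ on a digraph with $\theta$ vertex types, there exists an optimal solution (a collection of vertex-disjoint cycles of length at most $\ell_c$ and vertex-disjoint paths starting at altruistic vertices of length at most $\ell_p$, maximizing the number of covered non-altruistic vertices) in which every path and every cycle has length at most $\theta + 3$. -/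
variable {V : Type*}

/-- A feasible path: a nonempty directed path starting at an altruistic vertex,
with at most `ℓp` edges. -/
def FeasPath (A : V → V → Prop) (B : Finset V) (ℓp : ℕ) (l : List V) : Prop :=
  l ≠ [] ∧ l.Nodup ∧ l.Chain' A ∧ (∃ x, l.head? = some x ∧ x ∈ B) ∧
    l.length ≤ ℓp + 1

/-- A feasible cycle: a directed cycle with at most `ℓc` edges. -/
def FeasCycle (A : V → V → Prop) (ℓc : ℕ) (l : List V) : Prop :=
  2 ≤ l.length ∧ l.Nodup ∧ l.Chain' A ∧ l.length ≤ ℓc ∧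
    ∃ x y, l.head? = some x ∧ l.getLast? = some y ∧ A y x

/-- A solution: a collection of vertex-disjoint feasible paths and cycles. -/
def IsSolution [DecidableEq V] (A : V → V → Prop) (B : Finset V) (ℓp ℓc : ℕ)
    (S : Finset (List V)) : Prop :=
  (∀ l ∈ S, FeasPath A B ℓp l ∨ FeasCycle A ℓc l) ∧
    (∀ l ∈ S, ∀ l' ∈ S, l ≠ l' → ∀ x ∈ l, x ∉ l')

/-- The value of a solution: the number of covered non-altruistic vertices. -/
def solValue [DecidableEq V] (B : Finset V) (S : Finset (List V)) : ℕ :=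
  ((S.biUnion List.toFinset).filter (· ∉ B)).card

/-! ### Auxiliary lemmas -/

/-- If the images under `τ` are not nodup, the list splits around two
same-`τ` elements. -/
lemma exists_sameType_split {Γ : Type*} (τ : V → Γ) :
    ∀ l : List V, ¬ (l.map τ).Nodup →
      ∃ p u m v s, l = p ++ u :: (m ++ v :: s) ∧ τ u = τ v := by
  intro l
  induction l with
  | nil => simp
  | cons x t ih =>
    intro h
    rw [List.map_cons, List.nodup_cons] at h
    by_cases hx : τ x ∈ t.map τ
    · obtain ⟨v, hv, hveq⟩ := List.mem_map.1 hx
      obtain ⟨m, s, rfl⟩ := List.append_of_mem hv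
      exact ⟨[], x, m, v, s, by simp, hveq.symm⟩
    · have ht : ¬ (t.map τ).Nodup := fun hnd => h ⟨hx, hnd⟩
      obtain ⟨p, u, m, v, s, rfl, huv⟩ := ih ht
      exact ⟨x :: p, u, m, v, s, by simp, huv⟩

lemma pigeon_split {Γ : Type*} [Fintype Γ] (τ : V → Γ) (l : List V)
    (h : Fintype.card Γ < l.length) :
    ∃ p u m v s, l = p ++ u :: (m ++ v :: s) ∧ τ u = τ v := by
  apply exists_sameType_split
  intro hn
  have := hn.length_le_card
  rw [List.length_map] at this
  omega

/-- Splitting a too-long feasible cycle at two same-type vertices. -/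
lemma cycle_split {A : V → V → Prop} (hirr : ∀ x, ¬ A x x) {ℓc : ℕ}
    {p m s : List V} {u v : V}
    (hc : FeasCycle A ℓc (p ++ u :: (m ++ v :: s)))
    (hst : SameType A u v) :
    FeasCycle A ℓc (u :: m) ∧ FeasCycle A ℓc (v :: (s ++ p)) ∧
      ((u :: m) ++ (v :: (s ++ p))).Perm (p ++ u :: (m ++ v :: s)) := by
  obtain ⟨hlen2, hnd, hch, hlenc, x, y, hx, hy, hA⟩ := hc
  have hperm : ((u :: m) ++ (v :: (s ++ p))).Perm (p ++ u :: (m ++ v :: s)) := by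
    have e1 : (u :: m) ++ (v :: (s ++ p)) = ((u :: m) ++ (v :: s)) ++ p := by simp
    have e2 : p ++ u :: (m ++ v :: s) = p ++ ((u :: m) ++ (v :: s)) := by simp
    rw [e1, e2]
    exact List.perm_append_comm
  have hnd2 : ((u :: m) ++ (v :: (s ++ p))).Nodup := (hperm.nodup_iff).2 hnd
  obtain ⟨hnd1, hndr, hdisj⟩ := List.nodup_append.1 hnd2
  -- chain facts
  have hch' : List.Chain' A (p ++ ((u :: m) ++ (v :: s))) := by
    simpa using hch
  rw [List.Chain', List.isChain_append, List.isChain_append] at hch'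
  obtain ⟨hchp, ⟨hchum, hchvs, hlink2⟩, hlink1⟩ := hch'
  -- last of u::m
  set z := (u :: m).getLast (List.cons_ne_nil _ _) with hz
  have hzl : (u :: m).getLast? = some z := List.getLast?_eq_getLast _
  have hAzv : A z v := hlink2 z hzl v rfl
  have hAzu : A z u := (hst.1 z).2 hAzv
  -- m nonempty
  have hmne : m ≠ [] := by
    intro hme
    subst hme
    have : z = u := by simp [hz]
    rw [this] at hAzv
    exact hirr v ((hst.2 v).1 hAzv)
  -- head / last of the whole list
  have hxv : (p ++ u :: (m ++ v :: s)).getLast? = (v :: s).getLast? := by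
    have e : p ++ u :: (m ++ v :: s) = (p ++ u :: m) ++ (v :: s) := by simp
    rw [e, List.getLast?_append_of_ne_nil _ (List.cons_ne_nil _ _)]
  set w := (v :: s).getLast (List.cons_ne_nil _ _) with hwdef
  have hwl : (v :: s).getLast? = some w := List.getLast?_eq_getLast _
  have hyw : y = w := by
    rw [hxv, hwl] at hy
    exact (Option.some_inj.1 hy).symm
  -- lengths
  have hlen : (p ++ u :: (m ++ v :: s)).length
      = p.length + m.length + s.length + 2 := by
    simp; omega
  rw [hlen] at hlenc
  have hm0 : m.length ≠ 0 := fun h0 => hmne (List.length_eq_zero_iff.1 h0)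
  refine ⟨⟨?_, hnd1, hchum, ?_, u, z, rfl, hzl, hAzu⟩, ⟨?_, hndr, ?_, ?_, ?_⟩, hperm⟩
  · simp only [List.length_cons]; omega
  · simp only [List.length_cons]; omega
  · -- 2 ≤ (v :: (s ++ p)).length, i.e. s ++ p ≠ []
    rcases List.eq_nil_or_concat p with rfl | ⟨p', a, rfl⟩
    · rcases List.eq_nil_or_concat s with rfl | ⟨s', b, rfl⟩
      · -- both empty: A y x with x = u, y = v gives A v v
        exfalso
        simp only [List.nil_append, List.head?_cons] at hx
        have hxu : x = u := by injection hx with h; exact h.symm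
        have : y = v := by
          rw [hyw]; simp [hwdef]
        rw [hxu, this] at hA
        exact hirr v ((hst.1 v).1 hA)
      · simp only [List.length_cons, List.length_append, List.length_concat,
          List.length_nil]
        omega
    · simp only [List.length_cons, List.length_append, List.length_concat,
        List.length_nil]
      omega
  · -- chain of the second cycle
    have : (v :: (s ++ p)) = (v :: s) ++ p := by simp
    rw [this, List.Chain', List.isChain_append]
    refine ⟨hchvs, hchp, ?_⟩
    intro a ha c hc
    rw [hwl] at ha
    have haw : a = w := by injection ha with h; exact h.symm
    cases p with
    | nil => simp at hc
    | cons h0 t0 =>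
      have hc0 : c = h0 := by
        simp only [List.head?_cons] at hc
        injection hc with h; exact h.symm
      have hx0 : x = h0 := by
        simp only [List.cons_append, List.head?_cons] at hx
        injection hx with h; exact h.symm
      rw [haw, hc0, ← hyw, ← hx0]
      exact hA
  · simp only [List.length_cons, List.length_append]
    omega
  · -- the closing arc of the second cycle
    rcases List.eq_nil_or_concat p with rfl | ⟨p', a, rfl⟩
    · -- p = [] : last is w, head x = u, A w u → A w v
      have hxu : x = u := by
        simp only [List.nil_append, List.head?_cons] at hx
        injection hx with h; exact h.symm
      refine ⟨v, w, rfl, ?_, ?_⟩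
      · simp only [List.append_nil]
        exact hwl
      · rw [hxu, hyw] at hA
        exact (hst.1 w).1 hA
    · -- p = p'.concat a : last is a, A a u from hlink1, so A a v
      have hal : (p'.concat a).getLast? = some a := by
        simp
      have hAau : A a u := hlink1 a hal u rfl
      refine ⟨v, a, rfl, ?_, (hst.1 a).1 hAau⟩
      have e : v :: (s ++ p'.concat a) = (v :: (s ++ p')) ++ [a] := by simp
      rw [e, List.getLast?_append_of_ne_nil _ (by simp : ([a] : List V) ≠ [])]
      rfl

/-- Splitting a too-long feasible path at two same-type vertices in its tail. -/
lemma path_split {A : V → V → Prop} (hirr : ∀ x, ¬ A x x) {B : Finset V}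
    {ℓp ℓc : ℕ} (hℓ : ℓp ≤ ℓc) {b u v : V} {p m s : List V}
    (hp : FeasPath A B ℓp (b :: (p ++ u :: (m ++ v :: s))))
    (hst : SameType A u v) :
    FeasPath A B ℓp ((b :: p) ++ (v :: s)) ∧ FeasCycle A ℓc (u :: m) ∧
      (((b :: p) ++ (v :: s)) ++ (u :: m)).Perm (b :: (p ++ u :: (m ++ v :: s))) := by
  obtain ⟨hne, hnd, hch, ⟨x, hx, hxB⟩, hlenp⟩ := hp
  have hbB : b ∈ B := by
    simp only [List.head?_cons] at hx
    injection hx with h; rw [h]; exact hxB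
  have hperm : (((b :: p) ++ (v :: s)) ++ (u :: m)).Perm
      (b :: (p ++ u :: (m ++ v :: s))) := by
    have e1 : ((b :: p) ++ (v :: s)) ++ (u :: m)
        = (b :: p) ++ ((v :: s) ++ (u :: m)) := by simp
    have e2 : b :: (p ++ u :: (m ++ v :: s))
        = (b :: p) ++ ((u :: m) ++ (v :: s)) := by simp
    rw [e1, e2]
    exact (List.perm_append_comm).append_left (b :: p)
  have hnd2 := (hperm.nodup_iff).2 hnd
  obtain ⟨hndq, hndc, hdisj⟩ := List.nodup_append.1 hnd2
  -- chain decomposition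
  have hch' : List.Chain' A ((b :: p) ++ ((u :: m) ++ (v :: s))) := by
    simpa using hch
  rw [List.Chain', List.isChain_append, List.isChain_append] at hch'
  obtain ⟨hchbp, ⟨hchum, hchvs, hlink2⟩, hlink1⟩ := hch'
  set z := (u :: m).getLast (List.cons_ne_nil _ _) with hz
  have hzl : (u :: m).getLast? = some z := List.getLast?_eq_getLast _
  have hAzv : A z v := hlink2 z hzl v rfl
  have hAzu : A z u := (hst.1 z).2 hAzv
  have hmne : m ≠ [] := by
    intro hme
    subst hme
    have : z = u := by simp [hz]
    rw [this] at hAzv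
    exact hirr v ((hst.2 v).1 hAzv)
  set zb := (b :: p).getLast (List.cons_ne_nil _ _) with hzb
  have hzbl : (b :: p).getLast? = some zb := List.getLast?_eq_getLast _
  have hAzbu : A zb u := hlink1 zb hzbl u rfl
  have hAzbv : A zb v := (hst.1 zb).1 hAzbu
  have hlen : (b :: (p ++ u :: (m ++ v :: s))).length
      = p.length + m.length + s.length + 3 := by
    simp only [List.length_cons, List.length_append]
    omega
  rw [hlen] at hlenp
  refine ⟨⟨by simp, hndq, ?_, ⟨b, rfl, hbB⟩, ?_⟩,
    ⟨?_, hndc, hchum, ?_, u, z, rfl, hzl, hAzu⟩, hperm⟩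
  · -- chain of the new path
    rw [List.Chain', List.isChain_append]
    exact ⟨hchbp, hchvs, fun a ha c hc => by
      rw [hzbl] at ha
      simp only [List.head?_cons] at hc
      injection ha with ha; injection hc with hc
      rw [← ha, ← hc]; exact hAzbv⟩
  · -- length of the new path
    have : m.length ≠ 0 := fun h0 => hmne (List.length_eq_zero_iff.1 h0)
    simp only [List.length_append, List.length_cons]
    omega
  · -- cycle length ≥ 2
    have : m.length ≠ 0 := fun h0 => hmne (List.length_eq_zero_iff.1 h0)
    simp only [List.length_cons]
    omega
  · -- cycle length ≤ ℓc
    simp only [List.length_cons]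
    omega

/-- The squared-length measure of a solution. -/
def muMeasure (S : Finset (List V)) : ℕ := ∑ l ∈ S, l.length ^ 2

/-- Replacing a member of a solution by two disjoint feasible pieces covering
the same vertices yields a solution of the same value and smaller measure. -/
lemma replace_sol [DecidableEq V] {A : V → V → Prop} {B : Finset V} {ℓp ℓc : ℕ}
    {S : Finset (List V)} (hS : IsSolution A B ℓp ℓc S)
    {l l1 l2 : List V} (hl : l ∈ S)
    (h1 : FeasPath A B ℓp l1 ∨ FeasCycle A ℓc l1)
    (h2 : FeasPath A B ℓp l2 ∨ FeasCycle A ℓc l2)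
    (hne1 : l1 ≠ []) (hne2 : l2 ≠ [])
    (hperm : (l1 ++ l2).Perm l) :
    ∃ S', IsSolution A B ℓp ℓc S' ∧ solValue B S' = solValue B S ∧
      muMeasure S' < muMeasure S := by
  have hndl : l.Nodup := by
    rcases hS.1 l hl with h | h
    · exact h.2.1
    · exact h.2.1
  have hnd12 : (l1 ++ l2).Nodup := (hperm.nodup_iff).2 hndl
  obtain ⟨hnd1, hnd2', hdisj⟩ := List.nodup_append.1 hnd12
  have hmem1 : ∀ x ∈ l1, x ∈ l := fun x hx =>
    hperm.subset (List.mem_append_left _ hx)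
  have hmem2 : ∀ x ∈ l2, x ∈ l := fun x hx =>
    hperm.subset (List.mem_append_right _ hx)
  have hlenl : l.length = l1.length + l2.length := by
    rw [← hperm.length_eq]; simp
  have hpos1 : 0 < l1.length := List.length_pos_iff.2 hne1
  have hpos2 : 0 < l2.length := List.length_pos_iff.2 hne2
  have hl1S : l1 ∉ S := by
    intro hmem
    have hne : l ≠ l1 := by
      intro he; rw [he] at hlenl; omega
    have := hS.2 l hl l1 hmem hne (l1.head hne1)
      (hmem1 _ (List.head_mem hne1))
    exact this (List.head_mem hne1)
  have hl2S : l2 ∉ S := by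
    intro hmem
    have hne : l ≠ l2 := by
      intro he; rw [he] at hlenl; omega
    have := hS.2 l hl l2 hmem hne (l2.head hne2)
      (hmem2 _ (List.head_mem hne2))
    exact this (List.head_mem hne2)
  have hl12 : l1 ≠ l2 := by
    intro he
    exact hdisj _ (List.head_mem hne1) _ (he ▸ List.head_mem hne1) rfl
  refine ⟨insert l1 (insert l2 (S.erase l)), ?_, ?_, ?_⟩
  · constructor
    · intro l' hl'
      simp only [Finset.mem_insert] at hl'
      rcases hl' with rfl | rfl | h
      · exact h1
      · exact h2
      · exact hS.1 l' (Finset.mem_of_mem_erase h)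
    · have key : ∀ c ∈ S.erase l, ∀ x, x ∈ l → x ∉ c := by
        intro c hc x hx
        exact hS.2 l hl c (Finset.mem_of_mem_erase hc)
          (fun he => (Finset.ne_of_mem_erase hc) he.symm) x hx
      have keyS : ∀ c ∈ S.erase l, ∀ c' ∈ S.erase l, c ≠ c' → ∀ x ∈ c, x ∉ c' := by
        intro c hc c' hc' hne x hx
        exact hS.2 c (Finset.mem_of_mem_erase hc) c' (Finset.mem_of_mem_erase hc')
          hne x hx
      intro a ha b hb hab x hxa
      simp only [Finset.mem_insert] at ha hb
      rcases ha with rfl | rfl | ha <;> rcases hb with rfl | rfl | hb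
      · exact absurd rfl hab
      · exact fun hx2 => hdisj x hxa x hx2 rfl
      · exact key b hb x (hmem1 x hxa)
      · intro hx1; exact hdisj x hx1 x hxa rfl
      · exact absurd rfl hab
      · exact key b hb x (hmem2 x hxa)
      · intro hx1; exact key a ha x (hmem1 x hx1) hxa
      · intro hx2; exact key a ha x (hmem2 x hx2) hxa
      · exact keyS a ha b hb hab x hxa
  · -- value
    have hbi : (insert l1 (insert l2 (S.erase l))).biUnion List.toFinset
        = S.biUnion List.toFinset := by
      rw [Finset.biUnion_insert, Finset.biUnion_insert, ← Finset.union_assoc]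
      have h12 : l1.toFinset ∪ l2.toFinset = l.toFinset := by
        rw [← List.toFinset_append]
        ext x
        simp only [List.mem_toFinset]
        exact hperm.mem_iff
      rw [h12]
      conv_rhs => rw [← Finset.insert_erase hl, Finset.biUnion_insert]
    unfold solValue
    rw [hbi]
  · -- measure
    have e2 : l2 ∉ S.erase l := fun h => hl2S (Finset.mem_of_mem_erase h)
    have e1 : l1 ∉ insert l2 (S.erase l) := by
      simp only [Finset.mem_insert]
      rintro (rfl | h)
      · exact hl12 rfl
      · exact hl1S (Finset.mem_of_mem_erase h)
    unfold muMeasure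
    rw [Finset.sum_insert e1, Finset.sum_insert e2]
    have hsum : ∑ x ∈ S, x.length ^ 2
        = l.length ^ 2 + ∑ x ∈ S.erase l, x.length ^ 2 := by
      exact (Finset.add_sum_erase _ _ hl).symm
    rw [hsum, hlenl]
    have : l1.length ^ 2 + l2.length ^ 2 < (l1.length + l2.length) ^ 2 := by
      nlinarith
    omega

/-- When `ℓp ≤ ℓc`, there is an optimal solution in which every path and every
cycle has length (number of edges) at most `θ + 3`, `θ` being the number of vertex types. -/
theorem stmt4 {Γ : Type*} [Fintype V] [DecidableEq V] [Fintype Γ]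
    (A : V → V → Prop) (hirr : ∀ x, ¬ A x x) (B : Finset V)
    (ℓp ℓc θ : ℕ) (hℓ : ℓp ≤ ℓc)
    (τ : V → Γ) (hτ : ∀ u v, τ u = τ v ↔ SameType A u v)
    (hθ : Fintype.card Γ = θ) :
    ∃ S : Finset (List V), IsSolution A B ℓp ℓc S ∧
      (∀ S' : Finset (List V), IsSolution A B ℓp ℓc S' → solValue B S' ≤ solValue B S) ∧
      ∀ l ∈ S, (FeasPath A B ℓp l → l.length - 1 ≤ θ + 3) ∧
        (FeasCycle A ℓc l → l.length ≤ θ + 3) := by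
  classical
  have empty_sol : IsSolution A B ℓp ℓc (∅ : Finset (List V)) := by
    constructor <;> intro l hl <;> simp at hl
  have val_le : ∀ S : Finset (List V), solValue B S ≤ Fintype.card V := fun S =>
    le_trans (Finset.card_filter_le _ _) (Finset.card_le_univ _)
  set P : ℕ → Prop := fun n => ∃ S, IsSolution A B ℓp ℓc S ∧ solValue B S = n with hP
  have hP0 : P 0 := ⟨∅, empty_sol, by simp [solValue]⟩
  have hmax : P (Nat.findGreatest P (Fintype.card V)) :=
    Nat.findGreatest_spec (Nat.zero_le _) hP0
  obtain ⟨S₀, hS₀, hval₀⟩ := hmax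
  have hub : ∀ S', IsSolution A B ℓp ℓc S' →
      solValue B S' ≤ Nat.findGreatest P (Fintype.card V) := fun S' h =>
    Nat.le_findGreatest (val_le S') ⟨S', h, rfl⟩
  set Q : ℕ → Prop := fun n => ∃ S, IsSolution A B ℓp ℓc S ∧
    (∀ S', IsSolution A B ℓp ℓc S' → solValue B S' ≤ solValue B S) ∧
    muMeasure S = n with hQdef
  have hQ : ∃ n, Q n :=
    ⟨muMeasure S₀, S₀, hS₀, fun S' h => le_trans (hub S' h) (le_of_eq hval₀.symm), rfl⟩
  obtain ⟨S, hS, hopt, hmu⟩ := Nat.find_spec hQ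
  refine ⟨S, hS, hopt, ?_⟩
  have hbound : ∀ l ∈ S, l.length ≤ θ + 1 := by
    intro l hl
    by_contra hlong
    push_neg at hlong
    -- get the splitting of l
    have contra : ∀ l1 l2 : List V,
        (FeasPath A B ℓp l1 ∨ FeasCycle A ℓc l1) →
        (FeasPath A B ℓp l2 ∨ FeasCycle A ℓc l2) →
        l1 ≠ [] → l2 ≠ [] → (l1 ++ l2).Perm l → False := by
      intro l1 l2 h1 h2 hne1 hne2 hperm
      obtain ⟨S', hS', hval', hmu'⟩ := replace_sol hS hl h1 h2 hne1 hne2 hperm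
      have hopt' : ∀ S'', IsSolution A B ℓp ℓc S'' →
          solValue B S'' ≤ solValue B S' := by
        intro S'' h''
        rw [hval']
        exact hopt S'' h''
      have hle : Nat.find hQ ≤ muMeasure S' := Nat.find_min' hQ ⟨S', hS', hopt', rfl⟩
      omega
    rcases hS.1 l hl with hp | hc
    · -- path case
      obtain ⟨b, t, rfl⟩ := List.exists_cons_of_ne_nil hp.1
      have htlen : Fintype.card Γ < t.length := by
        simp only [List.length_cons] at hlong
        omega
      obtain ⟨p, u, m, v, s, rfl, huv⟩ := pigeon_split τ t htlen
      have hst : SameType A u v := (hτ u v).1 huv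
      obtain ⟨hq, hc', hperm⟩ := path_split hirr hℓ hp hst
      exact contra _ _ (Or.inl hq) (Or.inr hc') (by simp) (by simp) hperm
    · -- cycle case
      have hllen : Fintype.card Γ < l.length := by omega
      obtain ⟨p, u, m, v, s, heq, huv⟩ := pigeon_split τ l hllen
      have hst : SameType A u v := (hτ u v).1 huv
      rw [heq] at hc
      obtain ⟨hc1, hc2, hperm⟩ := cycle_split hirr hc hst
      rw [← heq] at hperm
      exact contra _ _ (Or.inr hc1) (Or.inr hc2) (by simp) (by simp) hperm
  intro l hl
  have := hbound l hl
  exact ⟨fun _ => by omega, fun _ => by omega⟩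
end

section
/- Let $G$ be a digraph with vertex types indexed by $\Gamma$, where $n(\gamma)$ counts the vertices of type $\gamma$, and let $\mathcal{A}$ be the set of all realizable signatures (type-sequences of paths starting at altruistic vertices and of cycles, within the allowed length bounds when $\ell_p \le \ell_c$). Then the maximum number of non-altruistic vertices coverable by a disjoint collection of feasible paths and cycles equals the optimum of the integer program: maximize $\sum_{p \in \mathcal{A}} \lambda(p) x(p)$ subject to $\sum_{p \in \mathcal{A}} n_p(\gamma) x(p) \le n(\gamma)$ for all $\gamma \in \Gamma$ and $x(p) \in \{0, 1, \ldots, n\}$, where $n_p(\gamma)$ is the number of occurrences of type $\gamma$ in signature $p$ and $\lambda(p)$ is the number of non-altruistic types in $p$. -/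
variable {V Γ : Type*}

/-- A realizable path signature: type-sequence of a path starting at an altruistic
type, with at most `ℓp` edges. -/
def SigPath (E : Γ → Γ → Prop) (Balt : Γ → Prop) (ℓp : ℕ) (p : List Γ) : Prop :=
  p ≠ [] ∧ p.Chain' E ∧ (∃ γ, p.head? = some γ ∧ Balt γ) ∧
    (∀ γ ∈ p.tail, ¬ Balt γ) ∧ p.length ≤ ℓp + 1

/-- A realizable cycle signature: type-sequence of a cycle of non-altruistic types,
with at most `ℓc` edges. -/
def SigCycle (E : Γ → Γ → Prop) (Balt : Γ → Prop) (ℓc : ℕ) (p : List Γ) : Prop :=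
  2 ≤ p.length ∧ p.Chain' E ∧ (∃ γ δ, p.head? = some γ ∧ p.getLast? = some δ ∧ E δ γ) ∧
    (∀ γ ∈ p, ¬ Balt γ) ∧ p.length ≤ ℓc

/-- A feasible path of the graph: starts at an altruistic vertex, the rest are
non-altruistic, at most `ℓp` edges. -/
def GFeasPath (A : V → V → Prop) (B : Set V) (ℓp : ℕ) (l : List V) : Prop :=
  l ≠ [] ∧ l.Nodup ∧ l.Chain' A ∧ (∃ x, l.head? = some x ∧ x ∈ B) ∧
    (∀ x ∈ l.tail, x ∉ B) ∧ l.length ≤ ℓp + 1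

/-- A feasible cycle of the graph: a directed cycle of non-altruistic vertices with
at most `ℓc` edges. -/
def GFeasCycle (A : V → V → Prop) (B : Set V) (ℓc : ℕ) (l : List V) : Prop :=
  2 ≤ l.length ∧ l.Nodup ∧ l.Chain' A ∧
    (∃ x y, l.head? = some x ∧ l.getLast? = some y ∧ A y x) ∧
    (∀ x ∈ l, x ∉ B) ∧ l.length ≤ ℓc

/-! ### auxiliary lemmas -/

lemma aux_exists_preimage_list [DecidableEq V] [DecidableEq Γ] (τ : V → Γ)
    (J : List Γ) (F : Finset V)
    (h : ∀ γ, J.count γ ≤ (F.filter fun u => τ u = γ).card) :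
    ∃ K : List V, K.Nodup ∧ K.map τ = J ∧ ∀ x ∈ K, x ∈ F := by
  induction J generalizing F with
  | nil => exact ⟨[], by simp⟩
  | cons γ J ih =>
    have h1 : 0 < (F.filter fun u => τ u = γ).card := by
      have := h γ; simp [List.count_cons_self] at this; omega
    obtain ⟨u, hu⟩ := Finset.card_pos.mp h1
    simp only [Finset.mem_filter] at hu
    obtain ⟨K, hnd, hmap, hmem⟩ := ih (F.erase u) (fun δ => by
      have hδ := h δ
      rcases eq_or_ne δ γ with rfl | hne
      · have : ((F.erase u).filter fun v => τ v = δ).card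
            = (F.filter fun v => τ v = δ).card - 1 := by
          rw [Finset.filter_erase, Finset.card_erase_of_mem]
          simp [Finset.mem_filter, hu.1, hu.2]
        rw [this]
        simp only [List.count_cons_self] at hδ
        omega
      · have : ((F.erase u).filter fun v => τ v = δ) = F.filter fun v => τ v = δ := by
          rw [Finset.filter_erase, Finset.erase_eq_of_notMem]
          simp [Finset.mem_filter, hu.2, hne.symm]
        rw [this]
        have : (γ :: J).count δ = J.count δ := by
          simp [List.count_cons, hne, Ne.symm hne]
        omega)
    refine ⟨u :: K, ?_, by simp [hmap, hu.2], ?_⟩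
    · simp only [List.nodup_cons, hnd, and_true]
      intro hu'
      exact (Finset.ne_of_mem_erase (hmem u hu') rfl)
    · intro x hx
      rcases List.mem_cons.mp hx with rfl | hx
      · exact hu.1
      · exact Finset.mem_of_mem_erase (hmem x hx)

lemma aux_exists_split (τ : V → Γ) : ∀ (L : List (List Γ)) (K : List V),
    K.map τ = L.flatten →
    ∃ KS : List (List V), KS.flatten = K ∧ KS.map (·.map τ) = L := by
  intro L
  induction L with
  | nil =>
    intro K hK
    have : K = [] := by simpa using hK
    exact ⟨[], by simp [this], rfl⟩
  | cons l L ih =>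
    intro K hK
    simp only [List.flatten_cons] at hK
    obtain ⟨KS, h1, h2⟩ := ih (K.drop l.length) (by
      rw [List.map_drop, hK, List.drop_left])
    refine ⟨K.take l.length :: KS, by simp [h1], ?_⟩
    simp only [List.map_cons, h2, List.map_take, hK]
    rw [List.take_left]

lemma aux_card_biUnion_filter [DecidableEq V] (P : V → Prop) [DecidablePred P]
    (S : Finset (List V))
    (hnd : ∀ l ∈ S, l.Nodup)
    (hdisj : ∀ l ∈ S, ∀ l' ∈ S, l ≠ l' → ∀ x ∈ l, x ∉ l') :
    ((S.biUnion List.toFinset).filter fun x => P x).card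
      = ∑ l ∈ S, l.countP (fun x => decide (P x)) := by
  rw [Finset.filter_biUnion]
  rw [Finset.card_biUnion (by
    intro l hl l' hl' hne
    simp only [Finset.disjoint_left]
    intro x hx hx'
    simp only [Finset.mem_filter, List.mem_toFinset] at hx hx'
    exact hdisj l hl l' hl' hne x hx.1 hx'.1)]
  refine Finset.sum_congr rfl fun l hl => ?_
  have heq : Finset.filter (fun x => P x) l.toFinset
      = (l.filter (fun x => decide (P x))).toFinset := by
    ext x; simp
  rw [heq, List.toFinset_card_of_nodup ((hnd l hl).filter _), List.countP_eq_length_filter]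

lemma aux_countP_le_card [Fintype V] [DecidableEq V] (p : V → Prop) [DecidablePred p]
    (l : List V) (hl : l.Nodup) :
    l.countP (fun x => decide (p x)) ≤ (Finset.univ.filter p).card := by
  rw [List.countP_eq_length_filter, ← List.toFinset_card_of_nodup (hl.filter _)]
  apply Finset.card_le_card
  intro x hx
  simp only [List.mem_toFinset, List.mem_filter, decide_eq_true_eq] at hx
  simp [hx.2]

lemma aux_count_map_eq_countP [DecidableEq Γ] (τ : V → Γ) (l : List V) (γ : Γ) :
    (l.map τ).count γ = l.countP (fun x => decide (τ x = γ)) := by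
  simp [List.count, List.countP_map]
  rfl

section transfer

variable {E : Γ → Γ → Prop} {Balt : Γ → Prop} {τ : V → Γ} {A : V → V → Prop} {B : Set V}

lemma aux_sig_of_gfeas_path (hA : ∀ u v, A u v ↔ u ≠ v ∧ E (τ u) (τ v))
    (hB : ∀ u, u ∈ B ↔ Balt (τ u)) {ℓp : ℕ} {l : List V}
    (h : GFeasPath A B ℓp l) : SigPath E Balt ℓp (l.map τ) := by
  obtain ⟨h1, h2, h3, ⟨x, hx1, hx2⟩, h5, h6⟩ := h
  refine ⟨by simpa using h1,
    (List.isChain_map τ).mpr (h3.imp fun a b hab => ((hA a b).mp hab).2),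
    ⟨τ x, by simp [hx1], (hB x).mp hx2⟩, ?_, by simpa using h6⟩
  intro γ hγ
  rw [← List.map_tail] at hγ
  obtain ⟨y, hy, rfl⟩ := List.mem_map.mp hγ
  exact fun hb => h5 y hy ((hB y).mpr hb)

lemma aux_sig_of_gfeas_cycle (hA : ∀ u v, A u v ↔ u ≠ v ∧ E (τ u) (τ v))
    (hB : ∀ u, u ∈ B ↔ Balt (τ u)) {ℓc : ℕ} {l : List V}
    (h : GFeasCycle A B ℓc l) : SigCycle E Balt ℓc (l.map τ) := by
  obtain ⟨h1, h2, h3, ⟨x, y, hx1, hy1, hxy⟩, h5, h6⟩ := h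
  refine ⟨by simpa using h1,
    (List.isChain_map τ).mpr (h3.imp fun a b hab => ((hA a b).mp hab).2),
    ⟨τ x, τ y, by simp [hx1], by simp [hy1], ((hA y x).mp hxy).2⟩, ?_, by simpa using h6⟩
  intro γ hγ
  obtain ⟨z, hz, rfl⟩ := List.mem_map.mp hγ
  exact fun hb => h5 z hz ((hB z).mpr hb)

lemma aux_gfeas_of_sig_path (hE : ∀ γ, ¬ E γ γ)
    (hA : ∀ u v, A u v ↔ u ≠ v ∧ E (τ u) (τ v))
    (hB : ∀ u, u ∈ B ↔ Balt (τ u)) {ℓp : ℕ} {l : List V}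
    (hnd : l.Nodup) (h : SigPath E Balt ℓp (l.map τ)) : GFeasPath A B ℓp l := by
  obtain ⟨h1, h2, ⟨γ, hγ1, hγ2⟩, h5, h6⟩ := h
  have hchain : l.Chain' A := by
    refine ((List.isChain_map τ).mp h2).imp fun a b hab => (hA a b).mpr ⟨?_, hab⟩
    rintro rfl; exact hE _ hab
  refine ⟨by simpa using h1, hnd, hchain, ?_, ?_, by simpa using h6⟩
  · rw [List.head?_map] at hγ1
    obtain ⟨x, hx, hτx⟩ := Option.map_eq_some_iff.mp hγ1
    exact ⟨x, hx, (hB x).mpr (hτx ▸ hγ2)⟩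
  · intro x hx hxB
    refine h5 (τ x) ?_ ((hB x).mp hxB)
    rw [← List.map_tail]
    exact List.mem_map_of_mem (f := τ) hx

lemma aux_gfeas_of_sig_cycle (hE : ∀ γ, ¬ E γ γ)
    (hA : ∀ u v, A u v ↔ u ≠ v ∧ E (τ u) (τ v))
    (hB : ∀ u, u ∈ B ↔ Balt (τ u)) {ℓc : ℕ} {l : List V}
    (hnd : l.Nodup) (h : SigCycle E Balt ℓc (l.map τ)) : GFeasCycle A B ℓc l := by
  obtain ⟨h1, h2, ⟨γ, δ, hγ1, hδ1, hδγ⟩, h5, h6⟩ := h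
  have hchain : l.Chain' A := by
    refine ((List.isChain_map τ).mp h2).imp fun a b hab => (hA a b).mpr ⟨?_, hab⟩
    rintro rfl; exact hE _ hab
  have hlen : 2 ≤ l.length := by simpa using h1
  refine ⟨hlen, hnd, hchain, ?_, ?_, by simpa using h6⟩
  · rw [List.head?_map] at hγ1
    rw [List.getLast?_map] at hδ1
    obtain ⟨x, hx, hτx⟩ := Option.map_eq_some_iff.mp hγ1
    obtain ⟨y, hy, hτy⟩ := Option.map_eq_some_iff.mp hδ1
    refine ⟨x, y, hx, hy, (hA y x).mpr ⟨?_, by rw [hτx, hτy]; exact hδγ⟩⟩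
    -- y ≠ x since l.length ≥ 2, Nodup, x head, y last
    match l, hlen with
    | a :: b :: r, _ =>
      have hxa : a = x := by simpa using hx
      subst hxa
      have hyr : y ∈ b :: r := by
        rw [List.getLast?_cons_cons] at hy
        obtain ⟨hne, rfl⟩ := List.mem_getLast?_eq_getLast (Option.mem_def.mpr hy)
        exact List.getLast_mem hne
      intro hxy
      rw [hxy] at hyr
      exact (List.nodup_cons.mp hnd).1 hyr
  · intro x hx hxB
    exact h5 (τ x) (List.mem_map_of_mem (f := τ) hx) ((hB x).mp hxB)

end transfer

/-- The optimum of the kidney exchange problem on a digraph whose adjacency, and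
altruism, are determined by vertex types (with complete bipartite edges between type
classes) equals the optimum of the type-signature integer program: `m` non-altruistic
vertices are coverable by disjoint feasible paths/cycles iff a capacity-feasible
integer assignment of realizable signatures attains `λ`-value at least `m`. -/
theorem stmt13 [Fintype V] [DecidableEq V] [DecidableEq Γ]
    (E : Γ → Γ → Prop) (Balt : Γ → Prop) [DecidablePred Balt]
    (hE : ∀ γ, ¬ E γ γ)
    (τ : V → Γ) (A : V → V → Prop)
    (hA : ∀ u v, A u v ↔ u ≠ v ∧ E (τ u) (τ v))
    (B : Set V) (hB : ∀ u, u ∈ B ↔ Balt (τ u))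
    (ℓp ℓc : ℕ) (hℓ : ℓp ≤ ℓc)
    (n : Γ → ℕ) (hn : ∀ γ, n γ = (Finset.univ.filter fun u => τ u = γ).card)
    (m : ℕ) :
    (∃ S : Finset (List V),
        (∀ l ∈ S, GFeasPath A B ℓp l ∨ GFeasCycle A B ℓc l) ∧
        (∀ l ∈ S, ∀ l' ∈ S, l ≠ l' → ∀ x ∈ l, x ∉ l') ∧
        m ≤ ((S.biUnion List.toFinset).filter fun x => ¬ Balt (τ x)).card) ↔
    (∃ s : Multiset (List Γ),
        (∀ p ∈ s, (SigPath E Balt ℓp p ∨ SigCycle E Balt ℓc p) ∧ ∀ γ, p.count γ ≤ n γ) ∧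
        (∀ γ, (s.map fun p => p.count γ).sum ≤ n γ) ∧
        m ≤ (s.map fun p => p.countP fun γ => decide (¬ Balt γ)).sum) := by
  constructor
  · rintro ⟨S, hfeas, hdisj, hm⟩
    have hSnd : ∀ l ∈ S, l.Nodup := fun l hl => by
      rcases hfeas l hl with h | h
      · exact h.2.1
      · exact h.2.1
    refine ⟨S.val.map (fun l => l.map τ), ?_, ?_, ?_⟩
    · intro p hp
      obtain ⟨l, hl, rfl⟩ := Multiset.mem_map.mp hp
      rw [Finset.mem_val] at hl
      constructor
      · rcases hfeas l hl with h | h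
        · exact Or.inl (aux_sig_of_gfeas_path hA hB h)
        · exact Or.inr (aux_sig_of_gfeas_cycle hA hB h)
      · intro γ
        rw [aux_count_map_eq_countP, hn]
        exact aux_countP_le_card _ l (hSnd l hl)
    · intro γ
      have hc := aux_card_biUnion_filter (fun x => τ x = γ) S hSnd hdisj
      have hsum : (Multiset.map (fun p => p.count γ) (S.val.map (fun l => l.map τ))).sum
          = ∑ l ∈ S, l.countP (fun x => decide (τ x = γ)) := by
        rw [Multiset.map_map, Finset.sum]
        congr 1
        exact Multiset.map_congr rfl fun l _ => aux_count_map_eq_countP τ l γ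
      rw [hsum, ← hc, hn]
      exact Finset.card_le_card (Finset.filter_subset_filter _ (Finset.subset_univ _))
    · have hc := aux_card_biUnion_filter (fun x => ¬ Balt (τ x)) S hSnd hdisj
      have hsum : (Multiset.map (fun p => p.countP fun γ => decide (¬ Balt γ))
            (S.val.map (fun l => l.map τ))).sum
          = ∑ l ∈ S, l.countP (fun x => decide (¬ Balt (τ x))) := by
        rw [Multiset.map_map, Finset.sum]
        congr 1
        exact Multiset.map_congr rfl fun l _ => List.countP_map (f := τ) (l := l)
      rw [hsum, ← hc]
      exact hm
  · rintro ⟨s, hsig, hcap, hm⟩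
    obtain ⟨L, rfl⟩ : ∃ L : List (List Γ), (↑L : Multiset (List Γ)) = s :=
      ⟨s.toList, s.coe_toList⟩
    obtain ⟨K, hKnd, hKmap, -⟩ := aux_exists_preimage_list τ L.flatten Finset.univ (fun γ => by
      rw [List.count_flatten]
      have := hcap γ
      simpa [hn γ] using this)
    obtain ⟨KS, hKS1, hKS2⟩ := aux_exists_split τ L K hKmap
    rw [← hKS1] at hKnd
    have hflat := List.nodup_flatten.mp hKnd
    have hmemL : ∀ k ∈ KS, (k.map τ) ∈ (↑L : Multiset (List Γ)) := fun k hk => by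
      rw [← hKS2]
      exact Multiset.mem_coe.mpr (List.mem_map_of_mem hk)
    have hne : ∀ k ∈ KS, k ≠ [] := by
      intro k hk hknil
      rcases (hsig _ (hmemL k hk)).1 with h | h
      · exact h.1 (by simp [hknil])
      · exact absurd h.1 (by simp [hknil])
    have hKSnd : KS.Nodup := by
      refine hflat.2.imp_of_mem (fun {a b} ha hb hab => ?_)
      obtain ⟨x, hx⟩ := List.exists_mem_of_ne_nil a (hne a ha)
      intro h
      exact hab hx (h ▸ hx)
    set S : Finset (List V) := ⟨(↑KS : Multiset (List V)), by exact_mod_cast hKSnd⟩ with hS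
    have hmemS : ∀ {l}, l ∈ S ↔ l ∈ KS := fun {l} => by
      simp [hS, Finset.mem_mk]
    have hSnd : ∀ l ∈ S, l.Nodup := fun l hl => hflat.1 l (hmemS.mp hl)
    have hdisj : ∀ l ∈ S, ∀ l' ∈ S, l ≠ l' → ∀ x ∈ l, x ∉ l' := by
      intro l hl l' hl' hne'
      haveI : Std.Symm (@List.Disjoint V) := ⟨fun _ _ h => h.symm⟩
      exact hflat.2.forall (hmemS.mp hl) (hmemS.mp hl') hne'
    refine ⟨S, ?_, hdisj, ?_⟩
    · intro l hl
      have hk := hmemS.mp hl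
      rcases (hsig _ (hmemL l hk)).1 with h | h
      · exact Or.inl (aux_gfeas_of_sig_path hE hA hB (hSnd l hl) h)
      · exact Or.inr (aux_gfeas_of_sig_cycle hE hA hB (hSnd l hl) h)
    · have hc := aux_card_biUnion_filter (fun x => ¬ Balt (τ x)) S hSnd hdisj
      rw [hc]
      have : ∑ l ∈ S, l.countP (fun x => decide (¬ Balt (τ x)))
          = ((↑L : Multiset (List Γ)).map fun p => p.countP fun γ => decide (¬ Balt γ)).sum := by
        rw [← hKS2, Finset.sum]
        change (Multiset.map _ (↑KS : Multiset (List V))).sum = _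
        rw [Multiset.map_coe, Multiset.map_coe, Multiset.sum_coe, Multiset.sum_coe,
          List.map_map]
        exact congrArg List.sum (List.map_congr_left fun k _ => by
          simp only [Function.comp_apply]
          exact (List.countP_map (p := fun γ => decide (¬ Balt γ)) (f := τ) (l := k)).symm)
      rw [this]
      exact hm
end

section
/- In a digraph with vertex types, if a collection $C$ of directed paths and cycles is a subgraph of $G$, then defining $x(p)$ for each signature $p$ as the number of elements of $C$ with signature $p$, one has $\sum_p n_p(\gamma)\, x(p) \le n(\gamma)$ for every type $\gamma$, and $\sum_p \lambda(p)\, x(p)$ equals the total number of non-altruistic vertices covered by $C$, where the paths/cycles in $C$ are vertex-disjoint. -/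
variable {V Γ : Type*}

lemma fiber_sum {α β : Type*} [DecidableEq β] (C : Finset α) (f : α → β) (g : β → ℕ) :
    ∑ p ∈ C.image f, g p * (C.filter fun q => f q = p).card = ∑ q ∈ C, g (f q) := by
  rw [← Finset.sum_fiberwise_of_maps_to (fun q hq => Finset.mem_image_of_mem f hq)
    (fun q => g (f q))]
  refine Finset.sum_congr rfl fun p hp => ?_
  rw [Finset.sum_congr rfl (fun q hq => by rw [(Finset.mem_filter.mp hq).2]),
    Finset.sum_const, smul_eq_mul, mul_comm]

lemma countP_nodup {α : Type*} [DecidableEq α] (l : List α) (h : l.Nodup)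
    (P : α → Prop) [DecidablePred P] :
    l.countP (fun x => decide (P x)) = (l.toFinset.filter P).card := by
  have heq : Finset.filter P l.toFinset = (l.filter fun x => decide (P x)).toFinset := by
    ext x; simp [List.mem_filter]
  rw [heq, List.card_toFinset, (h.filter _).dedup, List.countP_eq_length_filter]

lemma nodup_of_feas (A : V → V → Prop) (l : List V)
    (h : l ≠ [] ∧ (IsDiPath A l ∨ IsDiCycle A l)) : l.Nodup := by
  rcases h.2 with h | h
  · exact h.1
  · exact h.2.1

lemma biUnion_filter_card [DecidableEq V] (C : Finset (List V))
    (hnd : ∀ l ∈ C, l.Nodup)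
    (hdisj : ∀ l ∈ C, ∀ l' ∈ C, l ≠ l' → ∀ x ∈ l, x ∉ l')
    (P : V → Prop) [DecidablePred P] :
    ∑ q ∈ C, (q.toFinset.filter P).card = ((C.biUnion List.toFinset).filter P).card := by
  rw [Finset.filter_biUnion]
  rw [Finset.card_biUnion]
  intro l hl l' hl' hne
  rw [Function.onFun, Finset.disjoint_left]
  intro x hx hx'
  exact hdisj l hl l' hl' hne x (List.mem_toFinset.mp (Finset.mem_of_mem_filter x hx))
    (List.mem_toFinset.mp (Finset.mem_of_mem_filter x hx'))

/-- Mapping a vertex-disjoint collection `C` of paths and cycles to the signature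
counts `x(p) = #{q ∈ C : signature q = p}` satisfies the type-capacity constraints,
and the `λ`-weighted total equals the number of covered non-altruistic vertices. -/
theorem stmt15 [Fintype V] [DecidableEq V] [DecidableEq Γ]
    (A : V → V → Prop) (τ : V → Γ) (Balt : Γ → Prop) [DecidablePred Balt]
    (n : Γ → ℕ) (hn : ∀ γ, n γ = (Finset.univ.filter fun u => τ u = γ).card)
    (C : Finset (List V))
    (hfeas : ∀ l ∈ C, l ≠ [] ∧ (IsDiPath A l ∨ IsDiCycle A l))
    (hdisj : ∀ l ∈ C, ∀ l' ∈ C, l ≠ l' → ∀ x ∈ l, x ∉ l') :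
    (∀ γ : Γ, ∑ p ∈ C.image (List.map τ),
        p.count γ * (C.filter fun q => q.map τ = p).card ≤ n γ) ∧
    ∑ p ∈ C.image (List.map τ),
        (p.countP fun γ => decide (¬ Balt γ)) * (C.filter fun q => q.map τ = p).card =
      ((C.biUnion List.toFinset).filter fun x => ¬ Balt (τ x)).card := by
  have hnd : ∀ l ∈ C, l.Nodup := fun l hl => nodup_of_feas A l (hfeas l hl)
  constructor
  · intro γ
    rw [fiber_sum C (List.map τ) (fun p => p.count γ)]
    have h1 : ∀ q ∈ C, (q.map τ).count γ = (q.toFinset.filter fun x => τ x = γ).card := by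
      intro q hq
      rw [← countP_nodup q (hnd q hq) (fun x => τ x = γ)]
      simp only [List.count_eq_countP, List.countP_map]
      exact (List.countP_congr fun x _ => by
        simp [Function.comp]).symm
    rw [Finset.sum_congr rfl h1,
      biUnion_filter_card C hnd hdisj (fun x => τ x = γ), hn]
    exact Finset.card_le_card (Finset.filter_subset_filter _ (Finset.subset_univ _))
  · rw [fiber_sum C (List.map τ) (fun p => p.countP fun γ => decide (¬ Balt γ))]
    have h1 : ∀ q ∈ C, (q.map τ).countP (fun γ => decide (¬ Balt γ)) =
        (q.toFinset.filter fun x => ¬ Balt (τ x)).card := by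
      intro q hq
      rw [← countP_nodup q (hnd q hq) (fun x => ¬ Balt (τ x)), List.countP_map]
      rfl
    rw [Finset.sum_congr rfl h1, biUnion_filter_card C hnd hdisj]
end
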